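/- Let C be a cocomplete category, let R and S be monads on C with S finitary (preserving filtered colimits), and let p : R ⇒ S be a morphism of monads. Then the induced functor p* : S-Alg → R-Alg has a left adjoint. -/

import Mathlib

open CategoryTheory CategoryTheory.Limits

universe v u

namespace Stmt6

variable {C : Type u} [Category.{v} C] [HasColimits C] {R S : Monad C} (p : R ⟶ S)
  (A : R.Algebra)

/-- The sequence of pushouts: at stage `i` we record `(Xⁱ, Xⁱ⁺¹, xᵢ : Xⁱ ⟶ Xⁱ⁺¹,
φⁱ : S Xⁱ ⟶ Xⁱ⁺¹)`. -/
noncomputable def st : ℕ → Σ (Y : C) (Z : C), (Y ⟶ Z) × (S.toFunctor.obj Y ⟶ Z)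
  | 0 => ⟨A.A, pushout A.a (p.app A.A), pushout.inl _ _, pushout.inr _ _⟩
  | (i+1) =>
      ⟨(st i).2.1,
        pushout (S.μ.app (st i).1 ≫ (st i).2.2.2) (S.toFunctor.map (st i).2.2.2),
        pushout.inl _ _, pushout.inr _ _⟩

noncomputable def ob (i : ℕ) : C := (st p A i).1

noncomputable def nx (i : ℕ) : ob p A i ⟶ ob p A (i+1) := (st p A i).2.2.1

noncomputable def ph (i : ℕ) : S.toFunctor.obj (ob p A i) ⟶ ob p A (i+1) := (st p A i).2.2.2

lemma sq_zero : A.a ≫ nx p A 0 = p.app A.A ≫ ph p A 0 := pushout.condition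

lemma sq_succ (i : ℕ) :
    (S.μ.app (ob p A i) ≫ ph p A i) ≫ nx p A (i+1) =
      S.toFunctor.map (ph p A i) ≫ ph p A (i+1) := pushout.condition

lemma hom_ext_succ (i : ℕ) {W : C} {f g : ob p A (i+1) ⟶ W}
    (h1 : nx p A i ≫ f = nx p A i ≫ g) (h2 : ph p A i ≫ f = ph p A i ≫ g) : f = g := by
  cases i with
  | zero => exact pushout.hom_ext h1 h2
  | succ j => exact pushout.hom_ext h1 h2

lemma nx_eq_unit : ∀ i, nx p A i = S.η.app (ob p A i) ≫ ph p A i := by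
  intro i
  induction i with
  | zero =>
      have h : S.η.app A.A = R.η.app A.A ≫ p.app A.A := (p.app_η A.A).symm
      show nx p A 0 = S.η.app A.A ≫ ph p A 0
      erw [h, Category.assoc, ← sq_zero, ← Category.assoc, A.unit]
      simp
      exact (Category.id_comp _).symm
  | succ i ih =>
      have K : ph p A i ≫ nx p A (i+1) = S.toFunctor.map (nx p A i) ≫ ph p A (i+1) := by
        rw [ih, Functor.map_comp, Category.assoc, ← sq_succ]
        have : S.toFunctor.map (S.η.app (ob p A i)) ≫ S.μ.app (ob p A i) = 𝟙 _ :=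
          S.right_unit (ob p A i)
        rw [← Category.assoc, ← Category.assoc, this]
        simp
      apply hom_ext_succ
      · have nat : nx p A i ≫ S.η.app (ob p A (i+1)) =
            S.η.app (ob p A i) ≫ S.toFunctor.map (nx p A i) :=
          S.η.naturality (nx p A i)
        rw [← Category.assoc, nat, Category.assoc, ← K, ← Category.assoc, ← ih]
      · have nat : ph p A i ≫ S.η.app (ob p A (i+1)) =
            S.η.app (S.toFunctor.obj (ob p A i)) ≫ S.toFunctor.map (ph p A i) :=
          S.η.naturality (ph p A i)
        have lu : S.η.app (S.toFunctor.obj (ob p A i)) ≫ S.μ.app (ob p A i) = 𝟙 _ :=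
          S.left_unit (ob p A i)
        rw [← Category.assoc, nat, Category.assoc, ← sq_succ, ← Category.assoc,
          ← Category.assoc, lu]
        simp

lemma ph_nx (i : ℕ) :
    ph p A i ≫ nx p A (i+1) = S.toFunctor.map (nx p A i) ≫ ph p A (i+1) := by
  rw [nx_eq_unit p A i, Functor.map_comp, Category.assoc, ← sq_succ]
  have : S.toFunctor.map (S.η.app (ob p A i)) ≫ S.μ.app (ob p A i) = 𝟙 _ :=
    S.right_unit (ob p A i)
  rw [← Category.assoc, ← Category.assoc, this]
  simp
section Colim

variable [PreservesFilteredColimits S.toFunctor]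

instance : PreservesColimitsOfShape ℕ S.toFunctor :=
  (preservesSmallestFilteredColimits_of_preservesFilteredColimits S.toFunctor
    ).preserves_filtered_colimits ℕ

noncomputable def Dg : ℕ ⥤ C := Functor.ofSequence (nx p A)

noncomputable def Xbar : C := colimit (Dg p A)

noncomputable def ι (i : ℕ) : ob p A i ⟶ Xbar p A := colimit.ι (Dg p A) i

lemma ι_succ (i : ℕ) : nx p A i ≫ ι p A (i+1) = ι p A i := by
  have := colimit.w (Dg p A) (homOfLE (Nat.le_succ i))
  rwa [show (Dg p A).map (homOfLE (Nat.le_succ i)) = nx p A i from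
    Functor.ofSequence_map_homOfLE_succ (nx p A) i] at this

noncomputable def sColim :
    IsColimit (S.toFunctor.mapCocone (colimit.cocone (Dg p A))) :=
  isColimitOfPreserves S.toFunctor (colimit.isColimit _)

noncomputable def ssColim :
    IsColimit ((S.toFunctor ⋙ S.toFunctor).mapCocone (colimit.cocone (Dg p A))) :=
  isColimitOfPreserves (S.toFunctor ⋙ S.toFunctor) (colimit.isColimit _)

noncomputable def phCocone : Cocone (Dg p A ⋙ S.toFunctor) where
  pt := Xbar p A
  ι := NatTrans.ofSequence (fun i => ph p A i ≫ ι p A (i+1)) (by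
    intro n
    have h1 : (Dg p A ⋙ S.toFunctor).map (homOfLE (n.le_add_right 1)) =
        S.toFunctor.map (nx p A n) := by
      simp [Dg]
      rfl
    rw [h1]
    show S.toFunctor.map (nx p A n) ≫ ph p A (n+1) ≫ ι p A (n+2) =
      (ph p A n ≫ ι p A (n+1)) ≫ 𝟙 _
    rw [← Category.assoc, ← ph_nx, Category.assoc, ι_succ, Category.comp_id])

noncomputable def phBar : S.toFunctor.obj (Xbar p A) ⟶ Xbar p A :=
  (sColim p A).desc (phCocone p A)

lemma phBar_fac (i : ℕ) :
    S.toFunctor.map (ι p A i) ≫ phBar p A = ph p A i ≫ ι p A (i+1) :=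
  (sColim p A).fac (phCocone p A) i

noncomputable def XbarAlg : S.Algebra where
  A := Xbar p A
  a := phBar p A
  unit := by
    apply colimit.hom_ext
    intro i
    have nat : ι p A i ≫ S.η.app (Xbar p A) =
        S.η.app (ob p A i) ≫ S.toFunctor.map (ι p A i) := S.η.naturality (ι p A i)
    erw [← Category.assoc]
    show (ι p A i ≫ S.η.app (Xbar p A)) ≫ phBar p A = colimit.ι (Dg p A) i ≫ 𝟙 _
    rw [nat, Category.assoc, phBar_fac, ← Category.assoc, ← nx_eq_unit, ι_succ,
      Category.comp_id]
    rfl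
  assoc := by
    apply (ssColim p A).hom_ext
    intro i
    show S.toFunctor.map (S.toFunctor.map (ι p A i)) ≫ S.μ.app (Xbar p A) ≫ phBar p A =
      S.toFunctor.map (S.toFunctor.map (ι p A i)) ≫ S.toFunctor.map (phBar p A) ≫ phBar p A
    have nat : S.toFunctor.map (S.toFunctor.map (ι p A i)) ≫ S.μ.app (Xbar p A) =
        S.μ.app (ob p A i) ≫ S.toFunctor.map (ι p A i) := S.μ.naturality (ι p A i)
    rw [← Category.assoc, nat, Category.assoc, phBar_fac]
    rw [← Functor.map_comp_assoc, phBar_fac, Functor.map_comp, Category.assoc, phBar_fac,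
      ← Category.assoc (S.toFunctor.map (ph p A i)), ← sq_succ]
    simp only [Category.assoc, ι_succ]

end Colim
section Univ

variable [PreservesFilteredColimits S.toFunctor] (B : S.Algebra) (f0 : A.A ⟶ B.A)
  (hf : A.a ≫ f0 = p.app A.A ≫ S.toFunctor.map f0 ≫ B.a)

noncomputable def fdata :
    ∀ i : ℕ, Σ' (g : ob p A i ⟶ B.A) (g' : ob p A (i+1) ⟶ B.A),
      (nx p A i ≫ g' = g) ∧ (ph p A i ≫ g' = S.toFunctor.map g ≫ B.a)
  | 0 => ⟨f0, pushout.desc f0 (S.toFunctor.map f0 ≫ B.a) hf,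
      pushout.inl_desc _ _ _, pushout.inr_desc _ _ _⟩
  | (i+1) =>
      ⟨(fdata i).2.1,
        pushout.desc (fdata i).2.1 (S.toFunctor.map (fdata i).2.1 ≫ B.a) (by
          have h := (fdata i).2.2.2
          have nat : S.toFunctor.map (S.toFunctor.map (fdata i).1) ≫ S.μ.app B.A =
              S.μ.app (ob p A i) ≫ S.toFunctor.map (fdata i).1 :=
            S.μ.naturality (fdata i).1
          have nat' : S.toFunctor.map (S.toFunctor.map (fdata i).1) ≫ S.μ.app B.A ≫ B.a =
              S.μ.app (ob p A i) ≫ S.toFunctor.map (fdata i).1 ≫ B.a := by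
            rw [← Category.assoc, nat, Category.assoc]
          show (S.μ.app (ob p A i) ≫ ph p A i) ≫ (fdata i).2.1 =
            S.toFunctor.map (ph p A i) ≫ S.toFunctor.map (fdata i).2.1 ≫ B.a
          rw [← Functor.map_comp_assoc, h, Functor.map_comp_assoc, ← B.assoc, nat', Category.assoc, h]),
        pushout.inl_desc _ _ _, pushout.inr_desc _ _ _⟩

noncomputable def fseq (i : ℕ) : ob p A i ⟶ B.A := (fdata p A B f0 hf i).1

lemma fseq_zero : fseq p A B f0 hf 0 = f0 := rfl

lemma fseq_nx (i : ℕ) : nx p A i ≫ fseq p A B f0 hf (i+1) = fseq p A B f0 hf i :=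
  (fdata p A B f0 hf i).2.2.1

lemma fseq_ph (i : ℕ) :
    ph p A i ≫ fseq p A B f0 hf (i+1) = S.toFunctor.map (fseq p A B f0 hf i) ≫ B.a :=
  (fdata p A B f0 hf i).2.2.2

noncomputable def fCocone : Cocone (Dg p A) where
  pt := B.A
  ι := NatTrans.ofSequence (fun i => fseq p A B f0 hf i) (by
    intro n
    rw [show (Dg p A).map (homOfLE (n.le_add_right 1)) = nx p A n from
      Functor.ofSequence_map_homOfLE_succ (nx p A) n]
    show nx p A n ≫ fseq p A B f0 hf (n+1) = fseq p A B f0 hf n ≫ 𝟙 _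
    rw [fseq_nx, Category.comp_id])

noncomputable def fbar : Xbar p A ⟶ B.A := colimit.desc (Dg p A) (fCocone p A B f0 hf)

lemma fbar_fac (i : ℕ) : ι p A i ≫ fbar p A B f0 hf = fseq p A B f0 hf i :=
  colimit.ι_desc (fCocone p A B f0 hf) i

lemma fbar_alg :
    S.toFunctor.map (fbar p A B f0 hf) ≫ B.a = phBar p A ≫ fbar p A B f0 hf := by
  apply (sColim p A).hom_ext
  intro i
  show S.toFunctor.map (ι p A i) ≫ S.toFunctor.map (fbar p A B f0 hf) ≫ B.a =
    S.toFunctor.map (ι p A i) ≫ phBar p A ≫ fbar p A B f0 hf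
  rw [← Functor.map_comp_assoc, fbar_fac, ← Category.assoc, phBar_fac, Category.assoc,
    fbar_fac, fseq_ph]

lemma fbar_unique (g : Xbar p A ⟶ B.A)
    (halg : S.toFunctor.map g ≫ B.a = phBar p A ≫ g) (h0 : ι p A 0 ≫ g = f0) :
    g = fbar p A B f0 hf := by
  have claim : ∀ i, ι p A i ≫ g = fseq p A B f0 hf i := by
    intro i
    induction i with
    | zero => exact h0
    | succ i ih =>
        apply hom_ext_succ
        · rw [← Category.assoc, ι_succ, ih, fseq_nx]
        · rw [← Category.assoc, ← phBar_fac, Category.assoc, ← halg, ← Category.assoc,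
            ← Functor.map_comp, ih, fseq_ph]
  apply colimit.hom_ext
  intro i
  rw [show colimit.ι (Dg p A) i ≫ g = fseq p A B f0 hf i from claim i,
    show colimit.ι (Dg p A) i ≫ fbar p A B f0 hf = fseq p A B f0 hf i from fbar_fac p A B f0 hf i]

end Univ
section Main

variable [PreservesFilteredColimits S.toFunctor]

noncomputable def XbarAlgU : A ⟶ (Monad.algebraFunctorOfMonadHom p).obj (XbarAlg p A) where
  f := ι p A 0
  h := by
    show R.toFunctor.map (ι p A 0) ≫ (p.app (Xbar p A) ≫ phBar p A) = A.a ≫ ι p A 0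
    have nat : R.toFunctor.map (ι p A 0) ≫ p.app (Xbar p A) =
        p.app A.A ≫ S.toFunctor.map (ι p A 0) := p.toNatTrans.naturality (ι p A 0)
    erw [← Category.assoc, nat, Category.assoc, phBar_fac, ← Category.assoc, ← sq_zero,
      Category.assoc, ι_succ]
    rfl

lemma hf_of (Y : StructuredArrow A (Monad.algebraFunctorOfMonadHom p)) :
    A.a ≫ Y.hom.f = p.app A.A ≫ S.toFunctor.map Y.hom.f ≫ Y.right.a := by
  have h : R.toFunctor.map Y.hom.f ≫ (p.app Y.right.A ≫ Y.right.a) = A.a ≫ Y.hom.f := Y.hom.h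
  have nat : R.toFunctor.map Y.hom.f ≫ p.app Y.right.A =
      p.app A.A ≫ S.toFunctor.map Y.hom.f := p.toNatTrans.naturality Y.hom.f
  erw [← h, ← Category.assoc, nat, Category.assoc]
  rfl

noncomputable def toAlgHom (Y : StructuredArrow A (Monad.algebraFunctorOfMonadHom p)) :
    XbarAlg p A ⟶ Y.right where
  f := fbar p A Y.right Y.hom.f (hf_of p A Y)
  h := fbar_alg p A Y.right Y.hom.f (hf_of p A Y)

noncomputable def descHom (Y : StructuredArrow A (Monad.algebraFunctorOfMonadHom p)) :
    StructuredArrow.mk (XbarAlgU p A) ⟶ Y :=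
  StructuredArrow.homMk (toAlgHom p A Y) (by
    apply Monad.Algebra.Hom.ext
    show ι p A 0 ≫ fbar p A Y.right Y.hom.f (hf_of p A Y) = Y.hom.f
    erw [fbar_fac]
    rfl)

lemma descHom_uniq (Y : StructuredArrow A (Monad.algebraFunctorOfMonadHom p))
    (m : StructuredArrow.mk (XbarAlgU p A) ⟶ Y) : m = descHom p A Y := by
  apply StructuredArrow.hom_ext
  apply Monad.Algebra.Hom.ext
  show m.right.f = fbar p A Y.right Y.hom.f (hf_of p A Y)
  apply fbar_unique
  · exact m.right.h
  · exact congrArg Monad.Algebra.Hom.f (StructuredArrow.w m)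

theorem main : (Monad.algebraFunctorOfMonadHom p).IsRightAdjoint := by
  haveI : ∀ A : R.Algebra, HasInitial (StructuredArrow A (Monad.algebraFunctorOfMonadHom p)) :=
    fun A => (IsInitial.ofUniqueHom (descHom p A) (fun Y m => descHom_uniq p A Y m)).hasInitial
  exact isRightAdjointOfStructuredArrowInitials _

end Main

end Stmt6

/-!
STATEMENT 6: Let `C` be a cocomplete category, let `R` and `S` be monads on `C` with
`S` finitary (its underlying endofunctor preserves filtered colimits), and let
`p : R ⟶ S` be a morphism of monads.  Then the induced functor
`p* : S-Alg ⥤ R-Alg` has a left adjoint.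
-/

theorem algebraFunctorOfMonadHom_isRightAdjoint
    {C : Type u} [Category.{v} C] [HasColimits C] {R S : Monad C} (p : R ⟶ S)
    [PreservesFilteredColimits S.toFunctor] :
    (Monad.algebraFunctorOfMonadHom p).IsRightAdjoint := by
  exact Stmt6.main p
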